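/- Let C be an origin-symmetric convex body in ℝⁿ with |C| = 1 and p ≥ n. Then there is an absolute constant c₀ > 0 (independent of n, p, C) such that c₀·C ⊆ Z_p(C) ⊆ C. -/

import Mathlib

open MeasureTheory Set Metric
open scoped ENNReal RealInnerProductSpace NNReal Pointwise

noncomputable section

abbrev E (n : ℕ) := EuclideanSpace ℝ (Fin n)

/-- A star body: compact, origin in the interior, star-shaped with respect to the
origin, and with continuous Minkowski functional (gauge). -/
def IsStarBody {n : ℕ} (K : Set (E n)) : Prop :=
  IsCompact K ∧ 0 ∈ interior K ∧
    (∀ x ∈ K, ∀ t : ℝ, 0 ≤ t → t ≤ 1 → t • x ∈ K) ∧ Continuous (gauge K)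

/-- An origin-symmetric convex body. -/
def IsSymmetricConvexBody {n : ℕ} (K : Set (E n)) : Prop :=
  IsCompact K ∧ Convex ℝ K ∧ 0 ∈ interior K ∧ ∀ x ∈ K, -x ∈ K


/-- The body Z_p(C), defined via its support function
h_{Z_p(C)}(th) = (∫_C |<x,th>|^p dx)^{1/p}. -/
def Zp (n : ℕ) (p : ℝ) (C : Set (E n)) : Set (E n) :=
  {y | ∀ θ : E n, ⟪y, θ⟫ ≤ (∫ x in C, |⟪x, θ⟫| ^ p) ^ (1 / p)}

/-- The polar set of K with respect to the standard inner product. -/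
def polarSet {n : ℕ} (K : Set (E n)) : Set (E n) :=
  {x | ∀ y ∈ K, ⟪x, y⟫ ≤ 1}

/-- For p ≥ n, Z_p(C) is isomorphic to C with an absolute constant. -/
theorem Zp_isomorphic_self :
    ∃ c₀ : ℝ, 0 < c₀ ∧ ∀ (n : ℕ), 0 < n → ∀ p : ℝ, (n : ℝ) ≤ p →
      ∀ C : Set (E n), IsSymmetricConvexBody C → volume C = 1 →
        c₀ • C ⊆ Zp n p C ∧ Zp n p C ⊆ C := by
  refine ⟨1/8, by norm_num, ?_⟩
  intro n hn p hp C hC hvol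
  obtain ⟨hcomp, hconv, hint, hsym⟩ := hC
  have hC0 : (0 : E n) ∈ C := interior_subset hint
  have hCmeas : MeasurableSet C := hcomp.isClosed.measurableSet
  have hn1 : (1 : ℝ) ≤ (n : ℝ) := by exact_mod_cast hn
  have hp1 : (1 : ℝ) ≤ p := le_trans hn1 hp
  have hp0 : (0 : ℝ) < p := lt_of_lt_of_le one_pos hp1
  have hcont : ∀ θ : E n, Continuous fun x : E n => |⟪x, θ⟫| ^ p := fun θ =>
    ((continuous_id.inner continuous_const).abs).rpow_const (fun x => Or.inr hp0.le)
  have hInt : ∀ θ : E n, IntegrableOn (fun x : E n => |⟪x, θ⟫| ^ p) C :=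
    fun θ => (hcont θ).continuousOn.integrableOn_compact hcomp
  have hIntNonneg : ∀ θ : E n, 0 ≤ ∫ x in C, |⟪x, θ⟫| ^ p := fun θ =>
    integral_nonneg (fun x => Real.rpow_nonneg (abs_nonneg _) p)
  have hvolC_ne : volume C ≠ ∞ := by rw [hvol]; exact ENNReal.one_ne_top
  constructor
  · -- left inclusion : (1/8) • C ⊆ Zp n p C
    rintro z ⟨y, hy, rfl⟩
    intro θ
    rw [real_inner_smul_left]
    rcases le_or_gt ⟪y, θ⟫ 0 with hneg | hposh
    · have h1 : (1/8 : ℝ) * ⟪y, θ⟫ ≤ 0 := by nlinarith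
      exact h1.trans (Real.rpow_nonneg (hIntNonneg θ) _)
    · set h : ℝ := ⟪y, θ⟫ with hh
      set A : Set (E n) := C ∩ {x | 0 ≤ ⟪x, θ⟫} with hA
      have hAmeas : MeasurableSet A :=
        hCmeas.inter (measurableSet_le measurable_const
          (continuous_id.inner continuous_const).measurable)
      have hAsub : A ⊆ C := inter_subset_left
      have hvolA_ne : volume A ≠ ∞ := fun hinf =>
        hvolC_ne (top_le_iff.1 (hinf ▸ measure_mono hAsub))
      -- volume A ≥ 1/2
      have hCsub : C ⊆ A ∪ (-A) := by
        intro x hx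
        rcases le_or_gt 0 ⟪x, θ⟫ with hx0 | hx0
        · exact Or.inl ⟨hx, hx0⟩
        · refine Or.inr ?_
          rw [Set.mem_neg]
          refine ⟨hsym x hx, ?_⟩
          simp only [Set.mem_setOf_eq, inner_neg_left]
          linarith
      have hvolnegA : volume (-A) = volume A := by
        have := Measure.addHaar_smul (volume : Measure (E n)) (-1 : ℝ) A
        simpa using this
      have hvolA : (1/2 : ℝ) ≤ (volume A).toReal := by
        have h1 : (1 : ℝ≥0∞) ≤ volume A + volume A := by
          calc (1 : ℝ≥0∞) = volume C := hvol.symm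
          _ ≤ volume (A ∪ (-A)) := measure_mono hCsub
          _ ≤ volume A + volume (-A) := measure_union_le _ _
          _ = volume A + volume A := by rw [hvolnegA]
        have h2 : (1 : ℝ) ≤ (volume A).toReal + (volume A).toReal := by
          have := ENNReal.toReal_mono (by finiteness) h1
          rwa [ENNReal.toReal_one, ENNReal.toReal_add hvolA_ne hvolA_ne] at this
        linarith
      -- the shifted set S
      set S : Set (E n) := ((2:ℝ)⁻¹ • y) +ᵥ ((2:ℝ)⁻¹ • A) with hS
      have hSmeas : MeasurableSet S :=
        (hAmeas.const_smul_of_ne_zero (by norm_num)).const_vadd _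
      have hvolS : (volume S).toReal = (2:ℝ)⁻¹ ^ n * (volume A).toReal := by
        rw [hS, measure_vadd, Measure.addHaar_smul_of_nonneg _ (by norm_num),
          finrank_euclideanSpace_fin, ENNReal.toReal_mul,
          ENNReal.toReal_ofReal (by positivity)]
      have hvolS_ne : volume S ≠ ∞ := by
        rw [hS, measure_vadd, Measure.addHaar_smul_of_nonneg _ (by norm_num)]
        exact ENNReal.mul_ne_top ENNReal.ofReal_ne_top hvolA_ne
      have hSmem : ∀ s ∈ S, s ∈ C ∧ h/2 ≤ ⟪s, θ⟫ := by
        rintro s hs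
        obtain ⟨w, hw, rfl⟩ := hs
        obtain ⟨a, ha, rfl⟩ := hw
        obtain ⟨haC, ha0⟩ := ha
        constructor
        · have := hconv hy haC (by norm_num : (0:ℝ) ≤ (2:ℝ)⁻¹)
            (by norm_num : (0:ℝ) ≤ (2:ℝ)⁻¹) (by norm_num)
          simpa [vadd_eq_add] using this
        · have : ⟪(2:ℝ)⁻¹ • y + (2:ℝ)⁻¹ • a, θ⟫ = (2:ℝ)⁻¹ * h + (2:ℝ)⁻¹ * ⟪a, θ⟫ := by
            rw [inner_add_left, real_inner_smul_left, real_inner_smul_left]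
          show h/2 ≤ ⟪(2:ℝ)⁻¹ • y + (2:ℝ)⁻¹ • a, θ⟫
          rw [this]
          simp only [Set.mem_setOf_eq] at ha0
          linarith
      -- lower bound on the integral
      have hstep1 : (h/2) ^ p * (volume S).toReal ≤ ∫ x in C, |⟪x, θ⟫| ^ p := by
        have hge : (h/2) ^ p * (volume S).toReal ≤ ∫ x in S, |⟪x, θ⟫| ^ p := by
          rw [mul_comm ((h/2) ^ p), ← measureReal_def, ← smul_eq_mul]
          refine setIntegral_ge_of_const_le hSmeas hvolS_ne (fun x hx => ?_)
            ((hInt θ).mono_set (fun x hx => (hSmem x hx).1))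
          have h2 := (hSmem x hx).2
          exact Real.rpow_le_rpow (by positivity) (h2.trans (le_abs_self _)) hp0.le
        refine hge.trans (setIntegral_mono_set (hInt θ) ?_ ?_)
        · exact Filter.Eventually.of_forall (fun x => Real.rpow_nonneg (abs_nonneg _) p)
        · exact HasSubset.Subset.eventuallyLE (fun x hx => (hSmem x hx).1)
      have hvolS_lb : (2:ℝ) ^ (-(2*p)) ≤ (volume S).toReal := by
        have h1 : (2:ℝ)⁻¹ ^ n * (1/2 : ℝ) ≤ (volume S).toReal := by
          rw [hvolS]
          exact mul_le_mul_of_nonneg_left hvolA (by positivity)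
        refine le_trans ?_ h1
        have e1 : (2:ℝ)⁻¹ ^ n * (1/2 : ℝ) = (2:ℝ) ^ (-((n:ℝ)+1)) := by
          rw [Real.rpow_neg (by norm_num), Real.rpow_add (by norm_num), Real.rpow_one,
            Real.rpow_natCast, inv_pow]
          field_simp
        rw [e1]
        apply Real.rpow_le_rpow_of_exponent_le (by norm_num)
        have : (n:ℝ) + 1 ≤ 2 * p := by nlinarith
        linarith
      have hkey : (h/8) ^ p ≤ ∫ x in C, |⟪x, θ⟫| ^ p := by
        have e2 : (h/8 : ℝ) ^ p = (h/2) ^ p * (2:ℝ) ^ (-(2*p)) := by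
          rw [show -(2*p) = (-2) * p by ring, Real.rpow_mul (by norm_num),
            ← Real.mul_rpow (by positivity) (by positivity)]
          congr 1
          rw [show ((-2 : ℝ)) = -((2:ℕ):ℝ) by norm_num, Real.rpow_neg (by norm_num),
            Real.rpow_natCast]
          ring
        rw [e2]
        calc (h/2) ^ p * (2:ℝ) ^ (-(2*p)) ≤ (h/2) ^ p * (volume S).toReal :=
              mul_le_mul_of_nonneg_left hvolS_lb (by positivity)
        _ ≤ _ := hstep1
      -- conclude
      have hfin : ((h/8) ^ p : ℝ) ^ (1/p) ≤ (∫ x in C, |⟪x, θ⟫| ^ p) ^ (1/p) :=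
        Real.rpow_le_rpow (by positivity) hkey (by positivity)
      have e3 : ((h/8 : ℝ) ^ p) ^ (1/p) = h/8 := by
        rw [← Real.rpow_mul (by positivity), mul_one_div, div_self hp0.ne', Real.rpow_one]
      rw [e3] at hfin
      linarith
  · -- right inclusion : Zp n p C ⊆ C
    intro y hy
    by_contra hyC
    obtain ⟨f, u, hfC, hfy⟩ := geometric_hahn_banach_closed_point hconv hcomp.isClosed hyC
    set θ := (InnerProductSpace.toDual ℝ (E n)).symm f with hθdef
    have hθ : ∀ x : E n, ⟪θ, x⟫ = f x := fun x => InnerProductSpace.toDual_symm_apply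
    have hu0 : 0 < u := by have := hfC 0 hC0; simpa using this
    have habs : ∀ x ∈ C, |⟪x, θ⟫| ≤ u := by
      intro x hx
      rw [real_inner_comm, hθ]
      rw [abs_le]
      constructor
      · have := hfC (-x) (hsym x hx)
        simp only [map_neg] at this
        linarith
      · exact (hfC x hx).le
    have hintle : ∫ x in C, |⟪x, θ⟫| ^ p ≤ u ^ p := by
      have : ∫ x in C, |⟪x, θ⟫| ^ p ≤ ∫ _x in C, u ^ p := by
        refine setIntegral_mono_on (hInt θ)
          (integrableOn_const hvolC_ne) hCmeas (fun x hx => ?_)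
        exact Real.rpow_le_rpow (abs_nonneg _) (habs x hx) hp0.le
      rwa [setIntegral_const, measureReal_def, hvol, ENNReal.toReal_one, one_smul] at this
    have hle : (∫ x in C, |⟪x, θ⟫| ^ p) ^ (1/p) ≤ u := by
      have h1 : (∫ x in C, |⟪x, θ⟫| ^ p) ^ (1/p) ≤ (u ^ p) ^ (1/p) :=
        Real.rpow_le_rpow (hIntNonneg θ) hintle (by positivity)
      rwa [← Real.rpow_mul hu0.le, mul_one_div, div_self hp0.ne', Real.rpow_one] at h1
    have hy' := hy θ
    have : ⟪y, θ⟫ = f y := by rw [real_inner_comm, hθ]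
    rw [this] at hy'
    linarith
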